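/- Let k be an algebraically closed field of characteristic 3. The polynomial f(x) = x^9 + t x^5 + x over k, where t is a primitive element of F_9, has nonzero discriminant, and the associated Cartier–Manin matrix (the entrywise cube root of the matrix with rows (0,1,0,0), (t,0,0,0), (0,0,0,t), (0,0,1,0)) is invertible; hence the hyperelliptic curve y^2 = f(x) is ordinary (a-number 0). -/

import Mathlib

open Polynomial Matrix

/-- Discriminant of a (monic) degree-9 polynomial, defined as the determinant of the
17×17 Sylvester matrix of `f` (formal degree 9) and its derivative (formal degree 8).
For monic `f` of degree 9 this equals the discriminant, since `(-1)^(9·8/2) = 1`. -/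
noncomputable def disc9 {k : Type*} [Field k] (f : Polynomial k) : k :=
  (Matrix.of fun i j : Fin 17 =>
    if (i : ℕ) < 8 then
      (if (j : ℕ) ≤ (i : ℕ) + 9 then f.coeff (9 + (i : ℕ) - (j : ℕ)) else 0)
    else
      (if (j : ℕ) ≤ (i : ℕ) then (Polynomial.derivative f).coeff ((i : ℕ) - (j : ℕ)) else 0)).det

/-- Forward map of the residue-class-mod-4 reindexing of `Fin 17`. -/
def myEF : (Fin 5 ⊕ (Fin 4 ⊕ (Fin 4 ⊕ Fin 4))) → Fin 17 :=
  Sum.elim (fun i => ⟨4 * i.val, by omega⟩)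
    (Sum.elim (fun i => ⟨4 * i.val + 1, by omega⟩)
      (Sum.elim (fun i => ⟨4 * i.val + 2, by omega⟩) (fun i => ⟨4 * i.val + 3, by omega⟩)))

/-- Inverse map of the residue-class-mod-4 reindexing of `Fin 17`. -/
def myEI (i : Fin 17) : Fin 5 ⊕ (Fin 4 ⊕ (Fin 4 ⊕ Fin 4)) :=
  if i.val % 4 = 0 then .inl ⟨i.val / 4, by omega⟩
  else if i.val % 4 = 1 then .inr (.inl ⟨i.val / 4 % 4, by omega⟩)
  else if i.val % 4 = 2 then .inr (.inr (.inl ⟨i.val / 4 % 4, by omega⟩))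
  else .inr (.inr (.inr ⟨i.val / 4 % 4, by omega⟩))

/-- The residue-class-mod-4 reindexing equivalence. -/
def myE : (Fin 5 ⊕ (Fin 4 ⊕ (Fin 4 ⊕ Fin 4))) ≃ Fin 17 :=
  ⟨myEF, myEI, by decide, by decide⟩

set_option maxHeartbeats 4000000 in
set_option maxRecDepth 8000 in
/-- for `t` a primitive element of `𝔽₉` (a multiplicative generator, i.e. of
order 8) inside an algebraically closed field of characteristic 3, the polynomial
`f = x^9 + t x^5 + x` has nonzero discriminant and the Cartier–Manin matrix of
`y² = f(x)` (entrywise cube root of the displayed matrix) is invertible, so the curve is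
ordinary (a-number `4 - rank H = 0`). -/
theorem stmt1 {k : Type*} [Field k] [IsAlgClosed k] [CharP k 3]
    (t : k) (ht8 : t ^ 8 = 1) (htprim : ∀ n : ℕ, 0 < n → n < 8 → t ^ n ≠ 1)
    (f : k[X]) (hf : f = X ^ 9 + C t * X ^ 5 + X) :
    disc9 f ≠ 0 ∧
      ∀ H : Matrix (Fin 4) (Fin 4) k,
        (∀ i j, H i j ^ 3 = !![0, 1, 0, 0; t, 0, 0, 0; 0, 0, 0, t; 0, 0, 1, 0] i j) →
        IsUnit H.det ∧ H.rank = 4 ∧ 4 - H.rank = 0 := by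
  have h3 : (3 : k) = 0 := by exact_mod_cast CharP.cast_eq_zero k 3
  have ht0 : t ≠ 0 := by
    intro h; rw [h] at ht8; simp at ht8
  constructor
  · -- discriminant is nonzero
    have hcoeff : ∀ n : ℕ, f.coeff n =
        if n = 9 then 1 else if n = 5 then t else if n = 1 then 1 else 0 := by
      intro n
      rw [hf]
      simp only [coeff_add, coeff_C_mul, coeff_X_pow, coeff_X]
      split_ifs <;> first | omega | ring
    have hd : ∀ n : ℕ, (Polynomial.derivative f).coeff n =
        if n = 4 then -t else if n = 0 then 1 else 0 := by
      intro n
      rw [coeff_derivative, hcoeff]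
      by_cases h8 : n = 8
      · subst h8; norm_num; linear_combination 3 * h3
      · by_cases h4 : n = 4
        · subst h4; norm_num; linear_combination 2 * t * h3
        · by_cases h0 : n = 0
          · subst h0; norm_num
          · have h1 : ¬(n + 1 = 9) := by omega
            have h2 : ¬(n + 1 = 5) := by omega
            have h5 : ¬(n + 1 = 1) := by omega
            simp [h1, h2, h5, h4, h0]
    have hG : (Matrix.of fun i j : Fin 17 =>
        if (i : ℕ) < 8 then
          (if (j : ℕ) ≤ (i : ℕ) + 9 then f.coeff (9 + (i : ℕ) - (j : ℕ)) else 0)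
        else
          (if (j : ℕ) ≤ (i : ℕ) then (Polynomial.derivative f).coeff ((i : ℕ) - (j : ℕ)) else 0)
          ).submatrix myEF myEF =
        Matrix.fromBlocks
          (!![1,t,1,0,0; 0,1,t,1,0; 0,-t,1,0,0; 0,0,-t,1,0; 0,0,0,-t,1]) 0 0
          (Matrix.fromBlocks (!![1,t,1,0; 0,1,t,1; 0,-t,1,0; 0,0,-t,1]) 0 0
            (Matrix.fromBlocks (!![1,t,1,0; 0,1,t,1; 0,-t,1,0; 0,0,-t,1]) 0 0
              (!![1,t,1,0; 0,1,t,1; 0,-t,1,0; 0,0,-t,1]))) := by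
      ext i j
      rcases i with i | i | i | i <;> rcases j with j | j | j | j <;>
        fin_cases i <;> fin_cases j <;>
        simp +decide [myEF, hcoeff, hd, Matrix.fromBlocks, Matrix.vecHead, Matrix.vecTail,
          Function.comp]
    have hdet : disc9 f =
        (!![1,t,1,0,0; 0,1,t,1,0; 0,-t,1,0,0; 0,0,-t,1,0; 0,0,0,-t,1] :
          Matrix (Fin 5) (Fin 5) k).det *
        ((!![1,t,1,0; 0,1,t,1; 0,-t,1,0; 0,0,-t,1] : Matrix (Fin 4) (Fin 4) k).det *
         ((!![1,t,1,0; 0,1,t,1; 0,-t,1,0; 0,0,-t,1] : Matrix (Fin 4) (Fin 4) k).det *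
          (!![1,t,1,0; 0,1,t,1; 0,-t,1,0; 0,0,-t,1] : Matrix (Fin 4) (Fin 4) k).det)) := by
      unfold disc9
      rw [← Matrix.det_submatrix_equiv_self myE]
      rw [show (⇑myE : _ → Fin 17) = myEF from rfl, hG,
        Matrix.det_fromBlocks_zero₂₁, Matrix.det_fromBlocks_zero₂₁,
        Matrix.det_fromBlocks_zero₂₁]
    have hB5 : (!![1,t,1,0,0; 0,1,t,1,0; 0,-t,1,0,0; 0,0,-t,1,0; 0,0,0,-t,1] :
        Matrix (Fin 5) (Fin 5) k).det = 1 - t ^ 2 := by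
      simp [Matrix.det_succ_row_zero, Fin.sum_univ_succ, Fin.succAbove]
      linear_combination t ^ 2 * h3
    have hB4 : (!![1,t,1,0; 0,1,t,1; 0,-t,1,0; 0,0,-t,1] :
        Matrix (Fin 4) (Fin 4) k).det = 1 - t ^ 2 := by
      simp [Matrix.det_succ_row_zero, Fin.sum_univ_succ, Fin.succAbove]
      linear_combination t ^ 2 * h3
    have hne : (1 : k) - t ^ 2 ≠ 0 :=
      sub_ne_zero_of_ne (Ne.symm (htprim 2 (by norm_num) (by norm_num)))
    rw [hdet, hB5, hB4]
    exact mul_ne_zero hne (mul_ne_zero hne (mul_ne_zero hne hne))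
  · -- the Cartier–Manin matrix is invertible
    intro H hH
    haveI : Fact (Nat.Prime 3) := ⟨by norm_num⟩
    let φ : k →+* k :=
      { toFun := fun x => x ^ 3
        map_one' := one_pow 3
        map_mul' := fun x y => mul_pow x y 3
        map_zero' := zero_pow (by norm_num)
        map_add' := fun x y => add_pow_char x y 3 }
    have hmap : H.map φ = !![0, 1, 0, 0; t, 0, 0, 0; 0, 0, 0, t; 0, 0, 1, 0] := by
      ext i j
      exact hH i j
    have hdetφ : H.det ^ 3 = t ^ 2 := by
      have h1 := RingHom.map_det φ H
      rw [show φ.mapMatrix H = H.map φ from rfl, hmap] at h1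
      have hA : (!![0, 1, 0, 0; t, 0, 0, 0; 0, 0, 0, t; 0, 0, 1, 0] :
          Matrix (Fin 4) (Fin 4) k).det = t ^ 2 := by
        simp [Matrix.det_succ_row_zero, Fin.sum_univ_succ, Fin.succAbove]
        ring
      rw [hA] at h1
      exact h1
    have hdet_ne : H.det ≠ 0 := by
      intro h
      rw [h, zero_pow (by norm_num : (3 : ℕ) ≠ 0)] at hdetφ
      exact ht0 (pow_eq_zero_iff (by norm_num : (2 : ℕ) ≠ 0) |>.mp hdetφ.symm)
    have hu : IsUnit H.det := isUnit_iff_ne_zero.mpr hdet_ne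
    have hrank : H.rank = 4 := by
      have := Matrix.rank_of_isUnit H ((Matrix.isUnit_iff_isUnit_det H).mpr hu)
      simpa using this
    exact ⟨hu, hrank, by rw [hrank]⟩
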